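/- Let k ≥ 1 be an integer, n ≥ 200k, ε > 0 real, and let f : {0,1}^n → {−1,1} be such that its influences are non-increasing, Inf_1(f) ≥ Inf_2(f) ≥ ⋯ ≥ Inf_n(f), and ∑_{j=k+1}^{200k} Inf_j(f) ≥ ε/2. Then there exists an integer ℓ with 0 ≤ ℓ ≤ ⌊log₂(200k)⌋ such that |{ j ∈ [n] : Inf_j(f) ≥ ε/(2^{ℓ+3}·log₂(400k)) }| ≥ k + 2^ℓ. -/

import Mathlib

open scoped Classical

/-- The Fourier coefficient `f̂(S) = 2^{-n} ∑_x f(x) (-1)^{∑_{j∈S} x_j}` of a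
function `f : {0,1}^n → ℝ`. -/
noncomputable def fourierCoef01 {n : ℕ} (f : (Fin n → Bool) → ℝ) (S : Finset (Fin n)) : ℝ :=
  (2^n : ℝ)⁻¹ * ∑ x : Fin n → Bool, f x * (-1 : ℝ) ^ (S.filter (fun j => x j = true)).card

/-- The influence of coordinate `j` on `f`: `Inf_j(f) = ∑_{T ∋ j} f̂(T)²`. -/
noncomputable def influence {n : ℕ} (f : (Fin n → Bool) → ℝ) (j : Fin n) : ℝ :=
  ∑ T ∈ Finset.univ.filter (fun T : Finset (Fin n) => j ∈ T), (fourierCoef01 f T)^2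

/- Coordinates are 0-indexed: `j : Fin n` with `(j : ℕ) = i` is the `(i+1)`-st variable,
so the sum of the `(k+1)`-st through `200k`-th influences is the sum over `k ≤ (j:ℕ) < 200k`. -/
theorem stmt8 (n k : ℕ) (hk : 1 ≤ k) (hn : 200 * k ≤ n) (ε : ℝ) (hε : 0 < ε)
    (f : (Fin n → Bool) → ℝ) (hf : ∀ x, f x = 1 ∨ f x = -1)
    (hmono : ∀ i j : Fin n, i ≤ j → influence f j ≤ influence f i)
    (hsum : ε / 2 ≤ ∑ j ∈ Finset.univ.filter
        (fun j : Fin n => k ≤ (j:ℕ) ∧ (j:ℕ) < 200 * k), influence f j) :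
    ∃ ℓ : ℕ, ℓ ≤ Nat.log 2 (200 * k) ∧
      (k + 2^ℓ : ℕ) ≤ (Finset.univ.filter (fun j : Fin n =>
        ε / ((2:ℝ)^(ℓ+3) * Real.logb 2 (400 * (k:ℝ))) ≤ influence f j)).card := by
  by_contra hcon
  push_neg at hcon
  set L := Nat.log 2 (200 * k) with hL
  set lg : ℝ := Real.logb 2 (400 * (k:ℝ)) with hlg
  have hk' : (1:ℝ) ≤ (k:ℝ) := by exact_mod_cast hk
  have hlgpos : 0 < lg := by
    apply Real.logb_pos (by norm_num)
    nlinarith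
  -- threshold
  set t : ℕ → ℝ := fun ℓ => ε / ((2:ℝ)^(ℓ+3) * lg) with ht
  have htpos : ∀ ℓ, 0 < t ℓ := by
    intro ℓ
    apply div_pos hε
    positivity
  -- the index map
  set g : Fin n → ℕ := fun j => Nat.log 2 ((j:ℕ) - k + 1) with hg
  set S : Finset (Fin n) :=
    Finset.univ.filter (fun j : Fin n => k ≤ (j:ℕ) ∧ (j:ℕ) < 200 * k) with hS
  -- each relevant influence is small
  have hgmem : ∀ j ∈ S, g j ∈ Finset.range (L+1) := by
    intro j hj
    simp only [hS, Finset.mem_filter] at hj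
    simp only [Finset.mem_range, Nat.lt_succ_iff, hg]
    exact Nat.log_mono_right (by omega)
  have hsmall : ∀ j ∈ S, influence f j < t (g j) := by
    intro j hj
    simp only [hS, Finset.mem_filter] at hj
    obtain ⟨-, hjk, hj200⟩ := hj
    by_contra hbig
    push_neg at hbig
    have hℓL : g j ≤ L := Nat.log_mono_right (by omega)
    have hcard := hcon (g j) hℓL
    have hpow : 2 ^ (g j) ≤ (j:ℕ) - k + 1 := Nat.pow_log_le_self 2 (by omega)
    have hsub : Finset.Iic j ⊆ Finset.univ.filter (fun i : Fin n =>
        ε / ((2:ℝ)^(g j+3) * lg) ≤ influence f i) := by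
      intro i hi
      simp only [Finset.mem_Iic] at hi
      simp only [Finset.mem_filter, Finset.mem_univ, true_and]
      calc ε / ((2:ℝ)^(g j+3) * lg) ≤ influence f j := hbig
        _ ≤ influence f i := hmono i j hi
    have := Finset.card_le_card hsub
    rw [Fin.card_Iic] at this
    omega
  -- the set S is nonempty
  have hSne : S.Nonempty := by
    refine ⟨⟨k, by omega⟩, ?_⟩
    simp only [hS, Finset.mem_filter, Finset.mem_univ, true_and]
    exact ⟨le_rfl, by omega⟩
  -- sum bound
  have h1 : ∑ j ∈ S, influence f j < ∑ j ∈ S, t (g j) :=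
    Finset.sum_lt_sum_of_nonempty hSne hsmall
  -- fiberwise
  have h2 : ∑ j ∈ S, t (g j) =
      ∑ ℓ ∈ Finset.range (L+1), ∑ j ∈ S.filter (fun j => g j = ℓ), t (g j) :=
    (Finset.sum_fiberwise_of_maps_to hgmem _).symm
  -- bound each fiber
  have h3 : ∀ ℓ ∈ Finset.range (L+1),
      ∑ j ∈ S.filter (fun j => g j = ℓ), t (g j) ≤ ε / (8 * lg) := by
    intro ℓ _
    have hcardf : (S.filter (fun j => g j = ℓ)).card ≤ 2 ^ ℓ := by
      have : (S.filter (fun j => g j = ℓ)).card ≤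
          (Finset.Ico (2^ℓ) (2^(ℓ+1))).card := by
        refine Finset.card_le_card_of_injOn (fun j => (j:ℕ) - k + 1) ?_ ?_
        · intro j hj
          simp only [Finset.mem_coe, Finset.mem_filter, hS, Finset.mem_univ, true_and] at hj
          obtain ⟨⟨hjk, -⟩, hgj⟩ := hj
          have h1' : 2 ^ ℓ ≤ (j:ℕ) - k + 1 := hgj ▸ Nat.pow_log_le_self 2 (by omega)
          have h2' : (j:ℕ) - k + 1 < 2 ^ (ℓ+1) := by
            have hlogeq : Nat.log 2 ((j:ℕ) - k + 1) = ℓ := hgj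
            have := Nat.lt_pow_succ_log_self (by norm_num : 1 < 2) ((j:ℕ) - k + 1)
            rw [hlogeq] at this
            exact this
          simp only [Finset.mem_coe, Finset.mem_Ico]
          exact ⟨h1', h2'⟩
        · intro a ha b hb hab
          simp only [Finset.coe_filter, Set.mem_setOf_eq, hS, Finset.mem_filter,
            Finset.mem_univ, true_and] at ha hb
          have hab' : (a:ℕ) - k + 1 = (b:ℕ) - k + 1 := hab
          have : (a:ℕ) = (b:ℕ) := by omega
          exact Fin.ext this
      rw [Nat.card_Ico] at this
      have hps : 2^(ℓ+1) - 2^ℓ = 2^ℓ := by rw [pow_succ]; omega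
      omega
    calc ∑ j ∈ S.filter (fun j => g j = ℓ), t (g j)
        = ∑ j ∈ S.filter (fun j => g j = ℓ), t ℓ := by
          apply Finset.sum_congr rfl
          intro j hj
          rw [(Finset.mem_filter.mp hj).2]
      _ = (S.filter (fun j => g j = ℓ)).card * t ℓ := by rw [Finset.sum_const, nsmul_eq_mul]
      _ ≤ (2:ℝ)^ℓ * t ℓ := by
          apply mul_le_mul_of_nonneg_right _ (le_of_lt (htpos ℓ))
          exact_mod_cast hcardf
      _ = ε / (8 * lg) := by
          simp only [ht]
          rw [pow_add]
          field_simp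
          ring
  -- sum over ℓ
  have h4 : ∑ ℓ ∈ Finset.range (L+1), (ε / (8 * lg)) = (L+1) * (ε / (8 * lg)) := by
    rw [Finset.sum_const, Finset.card_range, nsmul_eq_mul]
    push_cast
    ring
  have hL1 : ((L:ℝ) + 1) ≤ lg := by
    have hpow : (2:ℕ) ^ (L+1) ≤ 400 * k := by
      have := Nat.pow_log_le_self 2 (show 200 * k ≠ 0 by omega)
      rw [← hL] at this
      calc (2:ℕ)^(L+1) = 2 * 2^L := by ring
        _ ≤ 2 * (200 * k) := by omega
        _ = 400 * k := by ring
    have hcast : ((2:ℝ))^(L+1) ≤ 400 * (k:ℝ) := by exact_mod_cast hpow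
    have := Real.logb_le_logb_of_le (by norm_num : (1:ℝ) < 2)
      (by positivity : (0:ℝ) < 2^(L+1)) hcast
    rwa [show Real.logb 2 ((2:ℝ)^(L+1)) = (L:ℝ) + 1 by
      rw [Real.logb, Real.log_pow]
      push_cast
      rw [mul_div_assoc, div_self (by positivity : Real.log 2 ≠ 0)]
      ring] at this
  have h5 : ((L:ℝ)+1) * (ε / (8 * lg)) ≤ ε / 8 := by
    calc ((L:ℝ)+1) * (ε / (8 * lg)) ≤ lg * (ε / (8 * lg)) := by
          apply mul_le_mul_of_nonneg_right hL1 (by positivity)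
      _ = ε / 8 := by
          rw [mul_div_assoc']
          rw [show lg * ε = ε * lg by ring, mul_comm (8:ℝ) lg, ← div_div,
            mul_div_assoc, div_self (ne_of_gt hlgpos), mul_one]
  have : ε / 2 < ε / 8 := by
    calc ε / 2 ≤ ∑ j ∈ S, influence f j := hsum
      _ < ∑ j ∈ S, t (g j) := h1
      _ = _ := h2
      _ ≤ ∑ ℓ ∈ Finset.range (L+1), (ε / (8 * lg)) := Finset.sum_le_sum h3
      _ = (L+1) * (ε / (8 * lg)) := h4
      _ ≤ ε / 8 := h5
  linarith
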